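/- Let d ≥ 1, let Σ be a symmetric positive definite d×d real matrix, let z ∈ ℝ^d be nonzero, set υ = zᵀΣz, and let α ≥ 0 and φ > 0. Define u = (1/4)·( −αυφ + √(α²υ²φ² + 4υ) )², β = αφ/(√u + υαφ), and Σ' = Σ − β·Σ z zᵀ Σ. Then zᵀ Σ' z = u; that is, the quantity u appearing in the update coefficients equals exactly the variance of the updated Gaussian model in the direction z. -/

import Mathlib

set_option maxHeartbeats 1000000


open Matrix Real

lemma vecMulVec_mulVec' {d : ℕ} (x y w : Fin d → ℝ) :
    (vecMulVec x y).mulVec w = (y ⬝ᵥ w) • x := by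
  funext i
  simp [Matrix.mulVec, Matrix.vecMulVec_apply, dotProduct, Finset.mul_sum,
    mul_comm, mul_assoc, mul_left_comm]

/-- **The quantity `u` is the updated variance in the direction `z`.** With
`u = ¼(−αυφ + √(α²υ²φ² + 4υ))²`, `β = αφ/(√u + υαφ)` and `Σ' = Σ − β Σ z zᵀ Σ`,
one has `zᵀ Σ' z = u`. -/
theorem cbr_updated_variance_eq
    (d : ℕ) (hd : 1 ≤ d)
    (S : Matrix (Fin d) (Fin d) ℝ) (hS : S.PosDef)
    (z : Fin d → ℝ) (hz : z ≠ 0)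
    (υ : ℝ) (hυ : υ = z ⬝ᵥ S.mulVec z)
    (α : ℝ) (hα : 0 ≤ α) (φ : ℝ) (hφ : 0 < φ)
    (u β : ℝ)
    (hu : u = (1/4) * (-(α * υ * φ) + Real.sqrt (α^2 * υ^2 * φ^2 + 4 * υ))^2)
    (hβ : β = α * φ / (Real.sqrt u + υ * α * φ))
    (S' : Matrix (Fin d) (Fin d) ℝ)
    (hS' : S' = S - β • (S * vecMulVec z z * S)) :
    z ⬝ᵥ S'.mulVec z = u := by
  have hυpos : 0 < υ := by
    have := hS.dotProduct_mulVec_pos hz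
    simpa [hυ] using this
  -- matrix reduction : z S' z = υ - β υ²
  have hquad : z ⬝ᵥ (S * vecMulVec z z * S).mulVec z = υ * υ := by
    rw [Matrix.mul_assoc, ← Matrix.mulVec_mulVec, ← Matrix.mulVec_mulVec,
      vecMulVec_mulVec', Matrix.mulVec_smul, dotProduct_smul]
    have hsym : S.vecMul z = S.mulVec z := by
      have : Sᵀ = S := by
        have := hS.1
        simpa [Matrix.IsHermitian, Matrix.conjTranspose_eq_transpose_of_trivial] using this
      rw [← this, Matrix.vecMul_transpose, this]
    rw [Matrix.dotProduct_mulVec, hsym, hυ, dotProduct_comm, smul_eq_mul]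
  have hred : z ⬝ᵥ S'.mulVec z = υ - β * (υ * υ) := by
    rw [hS', Matrix.sub_mulVec, dotProduct_sub, Matrix.smul_mulVec,
      dotProduct_smul, hquad, ← hυ]
    simp [smul_eq_mul]
  rw [hred]
  -- now the real-number part
  set s := Real.sqrt (α^2 * υ^2 * φ^2 + 4 * υ) with hsdef
  have harg : 0 ≤ α^2 * υ^2 * φ^2 + 4 * υ := by positivity
  have hs2 : s^2 = α^2 * υ^2 * φ^2 + 4 * υ := Real.sq_sqrt harg
  have hsnn : 0 ≤ s := Real.sqrt_nonneg _
  have havφ : 0 ≤ α * υ * φ := by positivity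
  have hsge : α * υ * φ ≤ s := by
    nlinarith [sq_nonneg (s - α * υ * φ)]
  have hunn : 0 ≤ (-(α * υ * φ) + s) / 2 := by linarith
  have hsqrtu : Real.sqrt u = (-(α * υ * φ) + s) / 2 := by
    rw [hu]
    rw [show (1/4 : ℝ) * (-(α * υ * φ) + s)^2 = ((-(α * υ * φ) + s) / 2)^2 by ring]
    exact Real.sqrt_sq hunn
  -- root equation: u + υ α φ √u = υ
  have hroot : u + υ * α * φ * Real.sqrt u = υ := by
    rw [hsqrtu, hu]
    nlinarith [hs2]
  have hdenpos : 0 < Real.sqrt u + υ * α * φ := by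
    rcases eq_or_lt_of_le hα with hα0 | hαpos
    · have : Real.sqrt u = s / 2 := by rw [hsqrtu, ← hα0]; ring
      have hspos : 0 < s := by nlinarith
      rw [this, ← hα0]
      nlinarith
    · have h1 : 0 < υ * α * φ := by positivity
      have := Real.sqrt_nonneg u
      linarith
  have hβ' : β = α * φ / (Real.sqrt u + υ * α * φ) := hβ
  rw [hβ']
  field_simp
  nlinarith [hroot, Real.sq_sqrt (show 0 ≤ u by nlinarith [sq_nonneg (-(α*υ*φ)+s), hu]), hdenpos]
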